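/- Let $\hat{y} > 0$, $\rho \in [0,1)$, and $Z = \frac{(\rho-1)\hat{y}}{\sqrt{1-\rho^2}}$. If $\rho \sqrt{\frac{1+\rho}{1-\rho}} < \hat{y}$, then $\hat{y}\,\Phi(Z) - \frac{\rho}{\sqrt{1-\rho^2}}\,\phi(Z) > 0$; i.e., the Expected Improvement as a function of correlation $\rho$ is strictly increasing whenever $\rho\sqrt{(1+\rho)/(1-\rho)} < \hat{y}$. -/

import Mathlib

open Real Set

/-- Standard normal pdf. -/
noncomputable def gaussPdf (x : ℝ) : ℝ := (Real.sqrt (2 * Real.pi))⁻¹ * Real.exp (-x ^ 2 / 2)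

/-- Standard normal cdf. -/
noncomputable def gaussCdf (x : ℝ) : ℝ := ∫ t in Set.Iic x, gaussPdf t

open MeasureTheory Filter Topology

lemma gaussPdf_pos (x : ℝ) : 0 < gaussPdf x := by
  unfold gaussPdf; positivity

lemma integrable_gaussPdf : Integrable gaussPdf := by
  have h : Integrable (fun x : ℝ => Real.exp (-(1/2) * x ^ 2)) := integrable_exp_neg_mul_sq (by norm_num)
  have : gaussPdf = fun x => (Real.sqrt (2 * Real.pi))⁻¹ * Real.exp (-(1/2) * x ^ 2) := by
    funext x; unfold gaussPdf; ring_nf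
  rw [this]
  exact h.const_mul _

lemma continuous_gaussPdf : Continuous gaussPdf := by
  unfold gaussPdf; continuity

lemma hasDerivAt_gaussCdf (x : ℝ) : HasDerivAt gaussCdf (gaussPdf x) x := by
  have heq : gaussCdf = fun y => gaussCdf 0 + ∫ t in (0:ℝ)..y, gaussPdf t := by
    funext y
    have := intervalIntegral.integral_Iic_sub_Iic (f := gaussPdf) (μ := volume)
      (a := (0:ℝ)) (b := y) integrable_gaussPdf.integrableOn integrable_gaussPdf.integrableOn
    unfold gaussCdf
    linarith [this]
  rw [heq]
  exact (intervalIntegral.integral_hasDerivAt_right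
    (integrable_gaussPdf.intervalIntegrable)
    (continuous_gaussPdf.aestronglyMeasurable.stronglyMeasurableAtFilter)
    continuous_gaussPdf.continuousAt).const_add _

lemma hasDerivAt_gaussPdf (x : ℝ) : HasDerivAt gaussPdf (-x * gaussPdf x) x := by
  have h1 : HasDerivAt (fun z : ℝ => -z ^ 2 / 2) (-x) x := by
    have := ((hasDerivAt_pow 2 x).neg).div_const 2
    simpa using this.congr_deriv (by ring)
  have h2 := (h1.exp).const_mul (Real.sqrt (2 * Real.pi))⁻¹
  unfold gaussPdf
  exact h2.congr_deriv (by ring)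

noncomputable def millsM (z : ℝ) : ℝ := gaussPdf z * (z + Real.sqrt (z ^ 2 + 4)) / 2

lemma hasDerivAt_sqrt_sq_add_four (z : ℝ) :
    HasDerivAt (fun z : ℝ => Real.sqrt (z ^ 2 + 4)) (z / Real.sqrt (z ^ 2 + 4)) z := by
  have h1 : HasDerivAt (fun z : ℝ => z ^ 2 + 4) (2 * z) z := by
    simpa using (hasDerivAt_pow 2 z).add_const 4
  have := h1.sqrt (by positivity)
  convert this using 1
  ring

lemma hasDerivAt_millsM (z : ℝ) :
    HasDerivAt millsM
      ((-z * gaussPdf z * (z + Real.sqrt (z ^ 2 + 4)) +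
        gaussPdf z * (1 + z / Real.sqrt (z ^ 2 + 4))) / 2) z := by
  have := ((hasDerivAt_gaussPdf z).mul ((hasDerivAt_id z).add (hasDerivAt_sqrt_sq_add_four z))).div_const 2
  unfold millsM
  exact this

lemma millsM_deriv_lt (z : ℝ) :
    (-z * gaussPdf z * (z + Real.sqrt (z ^ 2 + 4)) +
        gaussPdf z * (1 + z / Real.sqrt (z ^ 2 + 4))) / 2 < gaussPdf z := by
  set s := Real.sqrt (z ^ 2 + 4) with hs
  have hspos : 0 < s := Real.sqrt_pos.2 (by positivity)
  have hs2 : s ^ 2 = z ^ 2 + 4 := Real.sq_sqrt (by positivity)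
  have hp := gaussPdf_pos z
  have key : 0 < s * (1 + z ^ 2) + z * (z ^ 2 + 3) := by
    have hsq : (s * (1 + z ^ 2)) ^ 2 - (z * (z ^ 2 + 3)) ^ 2 = 4 := by nlinarith [hs2]
    nlinarith [mul_pos hspos (by positivity : (0:ℝ) < 1 + z ^ 2)]
  have hXs : (z / s - z ^ 2 - z * s) * s = z - z ^ 2 * s - z * s ^ 2 := by
    field_simp
  have h2 : z / s - z ^ 2 - z * s < 1 := by
    have h3 : (z / s - z ^ 2 - z * s) * s < 1 * s := by
      rw [hXs]
      have hz : z * s ^ 2 = z * (z ^ 2 + 4) := by rw [hs2]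
      nlinarith [key, hz]
    exact lt_of_mul_lt_mul_right h3 hspos.le
  have expand : -z * gaussPdf z * (z + s) + gaussPdf z * (1 + z / s) =
      gaussPdf z * (1 + (z / s - z ^ 2 - z * s)) := by ring
  rw [div_lt_iff₀ (by norm_num : (0:ℝ) < 2), expand]
  nlinarith [hp, h2]

lemma tendsto_gaussPdf_atBot : Tendsto gaussPdf atBot (𝓝 0) := by
  have h2 : Tendsto (fun x : ℝ => -x ^ 2 / 2) atBot atBot := by
    apply tendsto_atBot_mono' atBot ?_ tendsto_id
    filter_upwards [eventually_le_atBot (-2:ℝ)] with x hx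
    simp only [id]
    nlinarith
  have h3 : Tendsto (fun x : ℝ => Real.exp (-x ^ 2 / 2)) atBot (𝓝 0) :=
    Real.tendsto_exp_atBot.comp h2
  have h4 := h3.const_mul (Real.sqrt (2 * Real.pi))⁻¹
  rw [mul_zero] at h4
  exact h4.congr fun x => by rw [gaussPdf]

lemma tendsto_millsM_atBot : Tendsto millsM atBot (𝓝 0) := by
  apply squeeze_zero' (g := gaussPdf)
  · filter_upwards [eventually_le_atBot (0:ℝ)] with z hz
    have h1 : -z ≤ Real.sqrt (z ^ 2 + 4) := by
      have : Real.sqrt (z ^ 2) ≤ Real.sqrt (z ^ 2 + 4) := Real.sqrt_le_sqrt (by linarith)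
      rw [Real.sqrt_sq_eq_abs, abs_of_nonpos hz] at this
      exact this
    unfold millsM
    have := (gaussPdf_pos z).le
    nlinarith
  · filter_upwards [eventually_le_atBot (0:ℝ)] with z hz
    have h1 : Real.sqrt (z ^ 2 + 4) ≤ 2 - z := by
      rw [show (2:ℝ) - z = Real.sqrt ((2 - z) ^ 2) from (Real.sqrt_sq (by linarith)).symm]
      exact Real.sqrt_le_sqrt (by nlinarith)
    unfold millsM
    have := (gaussPdf_pos z).le
    nlinarith
  · exact tendsto_gaussPdf_atBot

lemma tendsto_gaussCdf_atBot : Tendsto gaussCdf atBot (𝓝 0) := by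
  apply squeeze_zero' (g := fun x => (Real.sqrt (2 * Real.pi))⁻¹ * Real.exp x)
  · exact Eventually.of_forall fun x =>
      setIntegral_nonneg measurableSet_Iic fun t _ => (gaussPdf_pos t).le
  · filter_upwards [eventually_le_atBot (-2:ℝ)] with x hx
    have hmono : gaussCdf x ≤ ∫ t in Iic x, (Real.sqrt (2 * Real.pi))⁻¹ * Real.exp t := by
      apply setIntegral_mono_on integrable_gaussPdf.integrableOn
        ((integrableOn_exp_Iic x).const_mul _) measurableSet_Iic
      intro t ht
      simp only [mem_Iic] at ht
      have ht2 : t ≤ -2 := le_trans ht hx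
      unfold gaussPdf
      have hexp : Real.exp (-t ^ 2 / 2) ≤ Real.exp t := by
        apply Real.exp_le_exp.2
        nlinarith
      have : (0:ℝ) < (Real.sqrt (2 * Real.pi))⁻¹ := by positivity
      nlinarith
    calc gaussCdf x ≤ _ := hmono
      _ = (Real.sqrt (2 * Real.pi))⁻¹ * Real.exp x := by
          rw [integral_const_mul, integral_exp_Iic]
  · have := Real.tendsto_exp_atBot.const_mul (Real.sqrt (2 * Real.pi))⁻¹
    simpa using this

lemma millsM_lt_gaussCdf (z : ℝ) : millsM z < gaussCdf z := by
  set f := fun z => gaussCdf z - millsM z with hf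
  have hderiv : ∀ x, HasDerivAt f (gaussPdf x -
      ((-x * gaussPdf x * (x + Real.sqrt (x ^ 2 + 4)) +
        gaussPdf x * (1 + x / Real.sqrt (x ^ 2 + 4))) / 2)) x :=
    fun x => (hasDerivAt_gaussCdf x).sub (hasDerivAt_millsM x)
  have hmono : StrictMono f := by
    apply strictMono_of_deriv_pos
    intro x
    rw [(hderiv x).deriv]
    linarith [millsM_deriv_lt x]
  have htend : Tendsto f atBot (𝓝 0) := by
    simpa using tendsto_gaussCdf_atBot.sub tendsto_millsM_atBot
  have h1 : 0 ≤ f (z - 1) := by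
    apply le_of_tendsto htend
    filter_upwards [eventually_le_atBot (z - 1)] with w hw
    exact (hmono.le_iff_le).2 hw
  have h2 : f (z - 1) < f z := hmono (by linarith)
  have : 0 < f z := lt_of_le_of_lt h1 h2
  simpa [hf] using this

theorem ei_deriv_pos (yhat ρ : ℝ) (hy : 0 < yhat) (hρ : ρ ∈ Set.Ico (0 : ℝ) 1)
    (h : ρ * Real.sqrt ((1 + ρ) / (1 - ρ)) < yhat) :
    0 < yhat * gaussCdf ((ρ - 1) * yhat / Real.sqrt (1 - ρ ^ 2)) -
        ρ / Real.sqrt (1 - ρ ^ 2) * gaussPdf ((ρ - 1) * yhat / Real.sqrt (1 - ρ ^ 2)) := by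
  obtain ⟨hρ0, hρ1⟩ := hρ
  set s := Real.sqrt (1 - ρ ^ 2) with hsdef
  have hs2 : s ^ 2 = 1 - ρ ^ 2 := Real.sq_sqrt (by nlinarith)
  have hspos : 0 < s := Real.sqrt_pos.2 (by nlinarith)
  set Z := (ρ - 1) * yhat / s with hZdef
  have hφ := gaussPdf_pos Z
  set T := Real.sqrt (Z ^ 2 + 4) with hTdef
  have hT2 : T ^ 2 = Z ^ 2 + 4 := Real.sq_sqrt (by positivity)
  have hTpos : 0 < T := Real.sqrt_pos.2 (by positivity)
  have hZs : Z * s = (ρ - 1) * yhat := by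
    rw [hZdef, div_mul_cancel₀ _ hspos.ne']
  have hZ2 : Z ^ 2 * s ^ 2 = (1 - ρ) ^ 2 * yhat ^ 2 := by
    have h1 : (Z * s) ^ 2 = ((ρ - 1) * yhat) ^ 2 := by rw [hZs]
    calc Z ^ 2 * s ^ 2 = (Z * s) ^ 2 := by ring
      _ = ((ρ - 1) * yhat) ^ 2 := h1
      _ = (1 - ρ) ^ 2 * yhat ^ 2 := by ring
  -- squared hypothesis
  have hq : (Real.sqrt ((1 + ρ) / (1 - ρ))) ^ 2 = (1 + ρ) / (1 - ρ) :=
    Real.sq_sqrt (div_nonneg (by linarith) (by linarith))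
  have hge : 0 ≤ ρ * Real.sqrt ((1 + ρ) / (1 - ρ)) := by positivity
  have hsqh : (ρ * Real.sqrt ((1 + ρ) / (1 - ρ))) ^ 2 < yhat ^ 2 := by
    have h1 := mul_self_lt_mul_self hge h
    calc (ρ * Real.sqrt ((1 + ρ) / (1 - ρ))) ^ 2
        = ρ * Real.sqrt ((1 + ρ) / (1 - ρ)) * (ρ * Real.sqrt ((1 + ρ) / (1 - ρ))) := sq _
      _ < yhat * yhat := h1
      _ = yhat ^ 2 := (sq yhat).symm
  have hkey : ρ ^ 2 * (1 + ρ) < yhat ^ 2 * (1 - ρ) := by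
    have hexp : (ρ * Real.sqrt ((1 + ρ) / (1 - ρ))) ^ 2 * (1 - ρ) = ρ ^ 2 * (1 + ρ) := by
      rw [mul_pow, hq, mul_assoc, div_mul_cancel₀ _ (by linarith : (1:ℝ) - ρ ≠ 0)]
    nlinarith [hsqh, hρ1]
  have hkey2 : ρ ^ 2 < yhat ^ 2 * (1 - ρ) := by nlinarith [hkey, pow_nonneg hρ0 3]
  -- main bound
  have hA : (yhat * T * s) ^ 2 = yhat ^ 2 * ((1 - ρ) ^ 2 * yhat ^ 2 + 4 * (1 - ρ ^ 2)) := by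
    have h1 : (yhat * T * s) ^ 2 = yhat ^ 2 * (T ^ 2 * s ^ 2) := by ring
    rw [h1, hT2, show (Z ^ 2 + 4) * s ^ 2 = Z ^ 2 * s ^ 2 + 4 * s ^ 2 from by ring, hZ2, hs2]
  have hBnn : 0 ≤ 2 * ρ + (1 - ρ) * yhat ^ 2 := by nlinarith
  have hanneg : 0 ≤ yhat * T * s := by positivity
  have hlt2 : (2 * ρ + (1 - ρ) * yhat ^ 2) ^ 2 < (yhat * T * s) ^ 2 := by
    rw [hA]; nlinarith [hkey2]
  have hmain : 2 * ρ + (1 - ρ) * yhat ^ 2 ≤ yhat * T * s :=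
    (lt_of_pow_lt_pow_left₀ 2 hanneg hlt2).le
  -- hence ρ / s ≤ yhat * (Z + T) / 2
  have hZterm : yhat * Z * s = (ρ - 1) * yhat ^ 2 := by
    rw [show yhat * Z * s = yhat * (Z * s) from by ring, hZs]; ring
  have hstep : ρ / s ≤ yhat * (Z + T) / 2 := by
    rw [div_le_div_iff₀ hspos (by norm_num : (0:ℝ) < 2)]
    have hsplit : yhat * (Z + T) * s = yhat * Z * s + yhat * T * s := by ring
    rw [hsplit, hZterm]
    linarith [hmain]
  have hmillsbd := millsM_lt_gaussCdf Z
  have hmul : yhat * millsM Z < yhat * gaussCdf Z := (mul_lt_mul_iff_right₀ hy).2 hmillsbd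
  have hlow : ρ / s * gaussPdf Z ≤ yhat * millsM Z := by
    unfold millsM
    rw [← hTdef]
    calc ρ / s * gaussPdf Z ≤ (yhat * (Z + T) / 2) * gaussPdf Z :=
          mul_le_mul_of_nonneg_right hstep hφ.le
      _ = yhat * (gaussPdf Z * (Z + T) / 2) := by ring
  linarith [hmul, hlow]
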